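/- Let N be a finite-index normal subgroup of B₃ contained in PB₃, and let (m,f) ∈ ℤ × F₂ satisfy the hexagon relations modulo N: σ₁^{2m+1} f⁻¹σ₂^{2m+1}f N = f⁻¹σ₁σ₂x₁₂^{-m}c^m N and f⁻¹σ₂^{2m+1}f σ₁^{2m+1} N = σ₂σ₁x₂₃^{-m}c^m f N. Then the assignments σ₁ ↦ σ₁^{2m+1}N, σ₂ ↦ f⁻¹σ₂^{2m+1}f N define a group homomorphism T_{m,f} : B₃ → B₃/N. -/

import Mathlib

def braidRel : Set (FreeGroup (Fin 2)) :=
  {FreeGroup.of 0 * FreeGroup.of 1 * FreeGroup.of 0 *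
    (FreeGroup.of 1 * FreeGroup.of 0 * FreeGroup.of 1)⁻¹}

/-- The Artin braid group on 3 strands. -/
abbrev B3 := PresentedGroup braidRel

def σ₁ : B3 := PresentedGroup.of 0
def σ₂ : B3 := PresentedGroup.of 1

/-- The standard projection B₃ → S₃. -/
def ρ : B3 →* Equiv.Perm (Fin 3) :=
  PresentedGroup.toGroup (f := ![Equiv.swap 0 1, Equiv.swap 1 2]) (by
    intro r hr
    simp only [braidRel, Set.mem_singleton_iff] at hr
    subst hr
    simp only [map_mul, map_inv, FreeGroup.lift_apply_of]
    decide)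

/-- The pure braid group on 3 strands. -/
def PB3 : Subgroup B3 := ρ.ker

def c : B3 := (σ₁ * σ₂ * σ₁) ^ 2

abbrev F2 := FreeGroup (Fin 2)
def xx : F2 := FreeGroup.of 0
def yy : F2 := FreeGroup.of 1

/-- The identification of F₂ with ⟨σ₁², σ₂²⟩ ≤ PB₃. -/
def ι : F2 →* B3 := FreeGroup.lift ![σ₁ ^ 2, σ₂ ^ 2]

/-- The pair (m, f) satisfies the two hexagon relations modulo N. -/
def Hex (N : Subgroup B3) [N.Normal] (m : ℤ) (f : F2) : Prop :=
  QuotientGroup.mk' N (σ₁ ^ (2 * m + 1) * (ι f)⁻¹ * σ₂ ^ (2 * m + 1) * ι f) =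
      QuotientGroup.mk' N ((ι f)⁻¹ * σ₁ * σ₂ * (σ₁ ^ 2) ^ (-m) * c ^ m) ∧
  QuotientGroup.mk' N ((ι f)⁻¹ * σ₂ ^ (2 * m + 1) * ι f * σ₁ ^ (2 * m + 1)) =
      QuotientGroup.mk' N (σ₂ * σ₁ * (σ₂ ^ 2) ^ (-m) * c ^ m * ι f)

/-- N_ord: the lcm of the orders of x₁₂N, x₂₃N and cN in B₃/N. -/
noncomputable def Nord (N : Subgroup B3) [N.Normal] : ℕ :=
  Nat.lcm
    (Nat.lcm (orderOf (QuotientGroup.mk' N (σ₁ ^ 2)))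
      (orderOf (QuotientGroup.mk' N (σ₂ ^ 2))))
    (orderOf (QuotientGroup.mk' N c))

/-- The endomorphism E_{m,f} of F₂. -/
def Emap (m : ℤ) (f : F2) : F2 →* F2 :=
  FreeGroup.lift ![xx ^ (2 * m + 1), f⁻¹ * yy ^ (2 * m + 1) * f]

/-- [m, f] is a GT-shadow with target N and kernel (source) K. -/
def IsShadow (K N : Subgroup B3) [N.Normal] (m : ℤ) (f : F2) : Prop :=
  Hex N m f ∧
  (∃ g ∈ commutator F2, g⁻¹ * f ∈ N.comap ι) ∧
  IsUnit ((2 * m + 1 : ℤ) : ZMod (Nord N)) ∧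
  ∃ T : B3 →* B3 ⧸ N,
    T σ₁ = QuotientGroup.mk' N (σ₁ ^ (2 * m + 1)) ∧
    T σ₂ = QuotientGroup.mk' N ((ι f)⁻¹ * σ₂ ^ (2 * m + 1) * ι f) ∧
    Function.Surjective T ∧
    T.ker = K

/-- [m, f] is a GT-shadow with target N (with unspecified source). -/
def IsShadowTgt (N : Subgroup B3) [N.Normal] (m : ℤ) (f : F2) : Prop :=
  ∃ K : Subgroup B3, IsShadow K N m f

lemma tmf_braid : σ₁ * σ₂ * σ₁ = σ₂ * σ₁ * σ₂ := by
  have h : PresentedGroup.mk braidRel (FreeGroup.of 0 * FreeGroup.of 1 * FreeGroup.of 0 *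
      (FreeGroup.of 1 * FreeGroup.of 0 * FreeGroup.of 1)⁻¹) = 1 := by
    apply (QuotientGroup.eq_one_iff _).mpr
    exact Subgroup.subset_normalClosure rfl
  rw [map_mul, map_inv, mul_inv_eq_one] at h
  simpa [σ₁, σ₂, PresentedGroup.of, map_mul] using h

lemma tmf_delta_s1 : (σ₁ * σ₂ * σ₁) * σ₁ = σ₂ * (σ₁ * σ₂ * σ₁) := by
  conv_lhs => rw [tmf_braid]
  simp [mul_assoc]

lemma tmf_delta_s2 : (σ₁ * σ₂ * σ₁) * σ₂ = σ₁ * (σ₁ * σ₂ * σ₁) := by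
  conv_rhs => rw [tmf_braid]
  simp [mul_assoc]

lemma tmf_c_comm_s1 : Commute c σ₁ := by
  show c * σ₁ = σ₁ * c
  rw [c, sq, mul_assoc, tmf_delta_s1, ← mul_assoc, tmf_delta_s2, mul_assoc, ← sq]

lemma tmf_conj_zpow (k : ℤ) : (σ₁*σ₂*σ₁) * σ₁ ^ k = σ₂ ^ k * (σ₁*σ₂*σ₁) := by
  have h : SemiconjBy (σ₁*σ₂*σ₁) σ₁ σ₂ := tmf_delta_s1
  exact (h.zpow_right k).eq

lemma tmf_key (m : ℤ) :
    σ₁ * σ₂ * (σ₁ ^ 2) ^ (-m) * c ^ m * σ₁ ^ (2 * m + 1)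
      = σ₂ ^ (2 * m + 1) * (σ₁ * σ₂ * (σ₁ ^ 2) ^ (-m) * c ^ m) := by
  have hcomm : c ^ m * σ₁ ^ (2 * m + 1) = σ₁ ^ (2 * m + 1) * c ^ m :=
    (tmf_c_comm_s1.zpow_zpow m (2 * m + 1)).eq
  have hconj : σ₂ ^ (2 * m) * (σ₁ * σ₂ * σ₁) = σ₁ * σ₂ * σ₁ * σ₁ ^ (2 * m) :=
    (tmf_conj_zpow (2 * m)).symm
  have hL : σ₁ * σ₂ * (σ₁ ^ 2) ^ (-m) * c ^ m * σ₁ ^ (2 * m + 1)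
      = σ₁ * σ₂ * σ₁ * c ^ m := by
    rw [mul_assoc, hcomm, ← mul_assoc]
    group
  have hR : σ₂ ^ (2 * m + 1) * (σ₁ * σ₂ * (σ₁ ^ 2) ^ (-m) * c ^ m)
      = σ₁ * σ₂ * σ₁ * c ^ m := by
    calc σ₂ ^ (2 * m + 1) * (σ₁ * σ₂ * (σ₁ ^ 2) ^ (-m) * c ^ m)
        = σ₂ ^ (2 * m) * (σ₂ * σ₁ * σ₂) * ((σ₁ ^ 2) ^ (-m) * c ^ m) := by group
      _ = σ₂ ^ (2 * m) * (σ₁ * σ₂ * σ₁) * ((σ₁ ^ 2) ^ (-m) * c ^ m) := by rw [← tmf_braid]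
      _ = σ₁ * σ₂ * σ₁ * σ₁ ^ (2 * m) * ((σ₁ ^ 2) ^ (-m) * c ^ m) := by rw [hconj]
      _ = σ₁ * σ₂ * σ₁ * c ^ m := by group
  rw [hL, hR]

lemma exists_Tmf_aux (N : Subgroup B3) [N.Normal] (m : ℤ) (g : B3)
    (hhex : QuotientGroup.mk' N (σ₁ ^ (2 * m + 1) * g⁻¹ * σ₂ ^ (2 * m + 1) * g) =
      QuotientGroup.mk' N (g⁻¹ * σ₁ * σ₂ * (σ₁ ^ 2) ^ (-m) * c ^ m)) :
    ∃ T : B3 →* B3 ⧸ N,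
      T σ₁ = QuotientGroup.mk' N (σ₁ ^ (2 * m + 1)) ∧
      T σ₂ = QuotientGroup.mk' N (g⁻¹ * σ₂ ^ (2 * m + 1) * g) := by
  set π := QuotientGroup.mk' N
  set A' : B3 ⧸ N := π (σ₁ ^ (2 * m + 1)) with hA
  set B' : B3 ⧸ N := π (g⁻¹ * σ₂ ^ (2 * m + 1) * g) with hB
  have hAB : A' * B' = π (g⁻¹ * σ₁ * σ₂ * (σ₁ ^ 2) ^ (-m) * c ^ m) := by
    rw [hA, hB, ← map_mul,
      show σ₁ ^ (2 * m + 1) * (g⁻¹ * σ₂ ^ (2 * m + 1) * g)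
        = σ₁ ^ (2 * m + 1) * g⁻¹ * σ₂ ^ (2 * m + 1) * g from by group]
    exact hhex
  have hmain : A' * B' * A' = B' * A' * B' := by
    calc A' * B' * A' = π (g⁻¹ * σ₁ * σ₂ * (σ₁ ^ 2) ^ (-m) * c ^ m) * π (σ₁ ^ (2 * m + 1)) := by
          rw [hAB]
      _ = π (g⁻¹ * σ₁ * σ₂ * (σ₁ ^ 2) ^ (-m) * c ^ m * σ₁ ^ (2 * m + 1)) := (map_mul π _ _).symm
      _ = π (g⁻¹ * σ₂ ^ (2 * m + 1) * g * (g⁻¹ * σ₁ * σ₂ * (σ₁ ^ 2) ^ (-m) * c ^ m)) := by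
          congr 1
          calc g⁻¹ * σ₁ * σ₂ * (σ₁ ^ 2) ^ (-m) * c ^ m * σ₁ ^ (2 * m + 1)
              = g⁻¹ * (σ₁ * σ₂ * (σ₁ ^ 2) ^ (-m) * c ^ m * σ₁ ^ (2 * m + 1)) := by group
            _ = g⁻¹ * (σ₂ ^ (2 * m + 1) * (σ₁ * σ₂ * (σ₁ ^ 2) ^ (-m) * c ^ m)) := by rw [tmf_key]
            _ = g⁻¹ * σ₂ ^ (2 * m + 1) * g * (g⁻¹ * σ₁ * σ₂ * (σ₁ ^ 2) ^ (-m) * c ^ m) := by group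
      _ = π (g⁻¹ * σ₂ ^ (2 * m + 1) * g) * π (g⁻¹ * σ₁ * σ₂ * (σ₁ ^ 2) ^ (-m) * c ^ m) :=
          map_mul π _ _
      _ = B' * (A' * B') := by rw [hAB]
      _ = B' * A' * B' := by rw [mul_assoc]
  refine ⟨PresentedGroup.toGroup (f := ![A', B']) ?_, ?_, ?_⟩
  · intro r hr
    simp only [braidRel, Set.mem_singleton_iff] at hr
    subst hr
    simp only [map_mul, map_inv, FreeGroup.lift_apply_of, Matrix.cons_val_zero, Matrix.cons_val_one,
      Matrix.head_cons, mul_inv_eq_one]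
    exact hmain
  · simpa [σ₁] using PresentedGroup.toGroup.of (x := (0 : Fin 2)) _
  · simpa [σ₂] using PresentedGroup.toGroup.of (x := (1 : Fin 2)) _

/-- If (m,f) satisfies the hexagon relations modulo N, then σ₁ ↦ σ₁^{2m+1}N,
σ₂ ↦ f⁻¹σ₂^{2m+1}f N defines a group homomorphism T_{m,f} : B₃ → B₃/N. -/
theorem exists_Tmf (N : Subgroup B3) [N.Normal] (hfin : N.FiniteIndex)
    (hle : N ≤ PB3) (m : ℤ) (f : F2) (hhex : Hex N m f) :
    ∃ T : B3 →* B3 ⧸ N,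
      T σ₁ = QuotientGroup.mk' N (σ₁ ^ (2 * m + 1)) ∧
      T σ₂ = QuotientGroup.mk' N ((ι f)⁻¹ * σ₂ ^ (2 * m + 1) * ι f) := by
  exact exists_Tmf_aux N m (ι f) hhex.1
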